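/- Monotonicity of reachability under abstraction: if rv : S → S_v and for each s, γ_s is a bijection on X with γ_s(ξ(x, s, t)) = ξ_v(γ_s(x), rv(s), t) (where ξ_v is the abstract flow), and the abstract initial set and guards contain the γ-images of the concrete ones (Θ_v ⊇ γ_{s_init}(Θ), guard_v((rv(s), rv(s'))) ⊇ γ_s(guard((s,s'))), reset_v ⊇ γ_{s'} ∘ reset ∘ γ_s⁻¹ on the corresponding sets), then for every concrete mode s: γ_s(Reach_H(s)) ⊆ Reach_{H_v}(rv(s)). -/
import Mathlib


/-- One step of a hybrid automaton in the scenario-verification setting: either flow within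
the current mode for some nonnegative time, or a discrete transition through a guard with a
reset. -/
def hybridStep {X M : Type*} (flow : X → M → ℝ → X)
    (guard : M × M → Set X) (reset : M × M → X → Set X) :
    (X × M) → (X × M) → Prop := fun p q =>
  (∃ t : ℝ, 0 ≤ t ∧ q.2 = p.2 ∧ q.1 = flow p.1 p.2 t) ∨
  (p.1 ∈ guard (p.2, q.2) ∧ q.1 ∈ reset (p.2, q.2) p.1)

/-- `Reach(s)`: continuous states visited while in mode `s`, across all executions from the
initial set `Θ` in the initial mode `minit`. -/
def hybridReach {X M : Type*} (flow : X → M → ℝ → X)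
    (guard : M × M → Set X) (reset : M × M → X → Set X)
    (Θ : Set X) (minit : M) (s : M) : Set X :=
  {x | ∃ x₀ ∈ Θ, Relation.ReflTransGen (hybridStep flow guard reset) (x₀, minit) (x, s)}

/-- Monotonicity of reachability under symmetry abstraction.  If each `γ_s`
is a bijection with `γ_s (ξ x s t) = ξ_v (γ_s x) (rv s) t`, and the abstract initial set,
guards, and resets contain the `γ`-images of the concrete ones, then
`γ_s '' Reach_H(s) ⊆ Reach_{H_v}(rv s)` for every concrete mode `s`. -/
theorem stmt17 {X S Sv : Type*}
    (ξ : X → S → ℝ → X) (ξv : X → Sv → ℝ → X)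
    (γ : S → X → X) (hγbij : ∀ s, Function.Bijective (γ s))
    (rv : S → Sv)
    (hflow : ∀ x s t, γ s (ξ x s t) = ξv (γ s x) (rv s) t)
    (Θ : Set X) (Θv : Set X) (sinit : S)
    (guard : S × S → Set X) (reset : S × S → X → Set X)
    (guardv : Sv × Sv → Set X) (resetv : Sv × Sv → X → Set X)
    (hΘ : γ sinit '' Θ ⊆ Θv)
    (hguard : ∀ s s', γ s '' guard (s, s') ⊆ guardv (rv s, rv s'))
    (hreset : ∀ s s' x x', x' ∈ reset (s, s') x →
      γ s' x' ∈ resetv (rv s, rv s') (γ s x)) :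
    ∀ s : S, γ s '' hybridReach ξ guard reset Θ sinit s ⊆
      hybridReach ξv guardv resetv Θv (rv sinit) (rv s) := by
  intro s y hy
  obtain ⟨x, ⟨x₀, hx₀, hrel⟩, rfl⟩ := hy
  refine ⟨γ sinit x₀, hΘ ⟨x₀, hx₀, rfl⟩, ?_⟩
  have key : ∀ p q : X × S, Relation.ReflTransGen (hybridStep ξ guard reset) p q →
      Relation.ReflTransGen (hybridStep ξv guardv resetv)
        (γ p.2 p.1, rv p.2) (γ q.2 q.1, rv q.2) := by
    intro p q h
    induction h with
    | refl => exact Relation.ReflTransGen.refl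
    | tail _ hstep ih =>
      refine ih.tail ?_
      rcases hstep with ⟨t, ht, hm, hx⟩ | ⟨hg, hr⟩
      · left
        exact ⟨t, ht, by rw [hm], by rw [hx, hm, hflow]⟩
      · right
        exact ⟨hguard _ _ ⟨_, hg, rfl⟩, hreset _ _ _ _ hr⟩
  exact key (x₀, sinit) (x, s) hrel
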